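/- Under CH, for every point u of ℕ* = βℕ∖ℕ, the space ℕ*∖{u} can be partitioned into two disjoint open sets each of which has u in its closure; in particular ℕ*∖{u} is not C*-embedded in ℕ*. -/

import Mathlib

open Set Filter

namespace GillmanAux

variable {u : Ultrafilter ℕ}

lemma not_mem_of_subset {s t : Set ℕ} (h : s ⊆ t) (ht : t ∉ u) : s ∉ u :=
  fun hs => ht (Filter.mem_of_superset hs h)

lemma union_not_mem {s t : Set ℕ} (hs : s ∉ u) (ht : t ∉ u) : s ∪ t ∉ u := by
  simp [Ultrafilter.union_mem_iff, hs, ht]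

lemma exists_strictMono_mem {S : ℕ → Set ℕ} (hS : ∀ n, (S n).Infinite) :
    ∃ x : ℕ → ℕ, StrictMono x ∧ ∀ n, x n ∈ S n := by
  choose f hf1 hf2 using fun n m => (hS n).exists_gt m
  refine ⟨fun n => Nat.rec (f 0 0) (fun n ih => f (n + 1) ih) n,
    strictMono_nat_of_lt_succ fun n => hf2 _ _, fun n => ?_⟩
  cases n with
  | zero => exact hf1 0 0
  | succ n => exact hf1 _ _

lemma exists_infinite_subset_not_mem (u : Ultrafilter ℕ) {T : Set ℕ} (hT : T.Infinite) :
    ∃ F, F ⊆ T ∧ F.Infinite ∧ F ∉ u := by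
  obtain ⟨x, hmono, hmem⟩ := exists_strictMono_mem (S := fun _ => T) fun _ => hT
  set Fe : Set ℕ := range fun n => x (2 * n) with hFe
  set Fo : Set ℕ := range fun n => x (2 * n + 1) with hFo
  have hsubE : Fe ⊆ T := by rintro _ ⟨n, rfl⟩; exact hmem _
  have hsubO : Fo ⊆ T := by rintro _ ⟨n, rfl⟩; exact hmem _
  have hinfE : Fe.Infinite :=
    Set.infinite_range_of_injective fun m n h => by
      have := hmono.injective h; omega
  have hinfO : Fo.Infinite :=
    Set.infinite_range_of_injective fun m n h => by
      have := hmono.injective h; omega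
  by_cases h : Fe ∈ u
  · refine ⟨Fo, hsubO, hinfO, fun hO => ?_⟩
    have hinter : Fe ∩ Fo ∈ u := inter_mem h hO
    have : Fe ∩ Fo = ∅ := by
      ext y; simp only [mem_inter_iff, mem_empty_iff_false, iff_false]
      rintro ⟨⟨m, rfl⟩, ⟨n, hn⟩⟩
      have := hmono.injective hn; omega
    rw [this] at hinter
    exact (Ultrafilter.neBot u).ne (empty_mem_iff_bot.mp hinter)
  · exact ⟨Fe, hsubE, hinfE, h⟩

lemma split (a c : ℕ → Set ℕ) (hac : ∀ m n, (a m ∩ c n).Finite) (B : Set ℕ) :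
    ∃ P Q : Set ℕ, P ∪ Q = B ∧ P ∩ Q = ∅ ∧ (∀ k, (P ∩ c k).Finite) ∧
      (∀ k, (Q ∩ a k).Finite) := by
  set Q := B ∩ ⋃ n, (c n \ (Iic n ∪ ⋃ j ∈ Iic n, a j)) with hQ
  have hQB : Q ⊆ B := inter_subset_left
  refine ⟨B \ Q, Q, Set.diff_union_of_subset hQB, by ext y; simp, fun k => ?_, fun k => ?_⟩
  · apply Set.Finite.subset
      (Set.Finite.union (finite_Iic k) ((finite_Iic k).biUnion fun j _ => hac j k))
    rintro y ⟨⟨hyB, hynQ⟩, hyc⟩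
    rw [mem_union]
    by_contra hy
    push_neg at hy
    obtain ⟨hy1, hy2⟩ := hy
    apply hynQ
    refine ⟨hyB, mem_iUnion.mpr ⟨k, hyc, fun hmem => ?_⟩⟩
    rcases hmem with h | h
    · exact hy1 h
    · obtain ⟨j, hj, hja⟩ := mem_iUnion₂.mp h
      exact hy2 (mem_iUnion₂.mpr ⟨j, hj, hja, hyc⟩)
  · apply Set.Finite.subset ((finite_Iio k).biUnion fun n _ => hac k n)
    rintro y ⟨⟨hyB, hyU⟩, hya⟩
    obtain ⟨n, hycn, hyn⟩ := mem_iUnion.mp hyU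
    have hnk : n < k := by
      by_contra hnk
      push_neg at hnk
      exact hyn (Or.inr (mem_iUnion₂.mpr ⟨k, hnk, hya⟩))
    exact mem_iUnion₂.mpr ⟨n, hnk, hya, hycn⟩

/-- The key one-step extension lemma. -/
lemma step (u : Ultrafilter ℕ) (hu : ∀ s ∈ u, s.Infinite)
    (a c : ℕ → Set ℕ) (ha : ∀ n, a n ∉ u) (hc : ∀ n, c n ∉ u)
    (hac : ∀ m n, (a m ∩ c n).Finite)
    (B : Set ℕ) (hB : B ∉ u) (E : Set ℕ) (hE : E ∈ u) :
    ∃ A' C' : Set ℕ, A' ∉ u ∧ C' ∉ u ∧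
      (∀ n, (A' ∩ c n).Finite) ∧ (∀ n, (a n ∩ C').Finite) ∧ A' ∩ C' = ∅ ∧
      B ⊆ A' ∪ C' ∧ (E ∩ A').Infinite ∧ (E ∩ C').Infinite := by
  obtain ⟨P, Q, hPQ, hPQd, hPc, hQa⟩ := split a c hac B
  have hPB : P ⊆ B := hPQ ▸ subset_union_left
  have hQB : Q ⊆ B := hPQ ▸ subset_union_right
  have hP : P ∉ u := not_mem_of_subset hPB hB
  have hQ : Q ∉ u := not_mem_of_subset hQB hB
  -- build F₁
  have hS : ∀ n : ℕ, (E ∩ Qᶜ ∩ ⋂ j ∈ Iic n, (c j)ᶜ : Set ℕ) ∈ u := fun n => by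
    refine inter_mem (inter_mem hE ?_) ?_
    · exact Ultrafilter.compl_mem_iff_notMem.mpr hQ
    · exact (biInter_mem (finite_Iic n)).mpr fun j _ =>
        Ultrafilter.compl_mem_iff_notMem.mpr (hc j)
  obtain ⟨x, hxmono, hxmem⟩ := exists_strictMono_mem fun n => hu _ (hS n)
  have hxE : ∀ n, x n ∈ E := fun n => (hxmem n).1.1
  have hxQ : ∀ n, x n ∉ Q := fun n => (hxmem n).1.2
  have hxc : ∀ n k, k ≤ n → x n ∉ c k := fun n k hk => by
    have := (hxmem n).2
    simp only [mem_iInter, mem_compl_iff] at this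
    exact this k hk
  have hrange_inf : (range x).Infinite := Set.infinite_range_of_injective hxmono.injective
  obtain ⟨F₁, hF₁sub, hF₁inf, hF₁u⟩ := exists_infinite_subset_not_mem u hrange_inf
  have hF₁E : F₁ ⊆ E := fun y hy => by obtain ⟨n, rfl⟩ := hF₁sub hy; exact hxE n
  have hF₁Q : ∀ y ∈ F₁, y ∉ Q := fun y hy => by
    obtain ⟨n, rfl⟩ := hF₁sub hy; exact hxQ n
  have hF₁c : ∀ k, (F₁ ∩ c k).Finite := fun k => by
    apply ((finite_Iio k).image x).subset
    rintro y ⟨hyF, hyc⟩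
    obtain ⟨n, rfl⟩ := hF₁sub hyF
    exact ⟨n, by by_contra h; simp only [mem_Iio, not_lt] at h; exact hxc n k h hyc, rfl⟩
  -- build F₂
  have hT : ∀ n : ℕ, (E ∩ Pᶜ ∩ F₁ᶜ ∩ ⋂ j ∈ Iic n, (a j)ᶜ : Set ℕ) ∈ u := fun n => by
    refine inter_mem (inter_mem (inter_mem hE ?_) ?_) ?_
    · exact Ultrafilter.compl_mem_iff_notMem.mpr hP
    · exact Ultrafilter.compl_mem_iff_notMem.mpr hF₁u
    · exact (biInter_mem (finite_Iic n)).mpr fun j _ =>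
        Ultrafilter.compl_mem_iff_notMem.mpr (ha j)
  obtain ⟨y, hymono, hymem⟩ := exists_strictMono_mem fun n => hu _ (hT n)
  have hyE : ∀ n, y n ∈ E := fun n => (hymem n).1.1.1
  have hyP : ∀ n, y n ∉ P := fun n => (hymem n).1.1.2
  have hyF₁ : ∀ n, y n ∉ F₁ := fun n => (hymem n).1.2
  have hya : ∀ n k, k ≤ n → y n ∉ a k := fun n k hk => by
    have := (hymem n).2
    simp only [mem_iInter, mem_compl_iff] at this
    exact this k hk
  obtain ⟨F₂, hF₂sub, hF₂inf, hF₂u⟩ := exists_infinite_subset_not_mem u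
    (Set.infinite_range_of_injective hymono.injective)
  have hF₂E : F₂ ⊆ E := fun z hz => by obtain ⟨n, rfl⟩ := hF₂sub hz; exact hyE n
  have hF₂P : ∀ z ∈ F₂, z ∉ P := fun z hz => by obtain ⟨n, rfl⟩ := hF₂sub hz; exact hyP n
  have hF₂F₁ : ∀ z ∈ F₂, z ∉ F₁ := fun z hz => by obtain ⟨n, rfl⟩ := hF₂sub hz; exact hyF₁ n
  have hF₂a : ∀ k, (a k ∩ F₂).Finite := fun k => by
    apply ((finite_Iio k).image y).subset
    rintro z ⟨hza, hzF⟩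
    obtain ⟨n, rfl⟩ := hF₂sub hzF
    exact ⟨n, by by_contra h; simp only [mem_Iio, not_lt] at h; exact hya n k h hza, rfl⟩
  refine ⟨P ∪ F₁, Q ∪ F₂, union_not_mem hP hF₁u, union_not_mem hQ hF₂u, ?_, ?_, ?_, ?_, ?_, ?_⟩
  · intro k
    rw [union_inter_distrib_right]
    exact (hPc k).union (hF₁c k)
  · intro k
    rw [inter_union_distrib_left]
    exact (by rw [inter_comm]; exact hQa k : (a k ∩ Q).Finite).union (hF₂a k)
  · apply eq_empty_iff_forall_notMem.mpr
    intro z hz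
    obtain ⟨h1, h2⟩ := hz
    rcases h1 with h1 | h1 <;> rcases h2 with h2 | h2
    · have : z ∈ P ∩ Q := ⟨h1, h2⟩
      rw [hPQd] at this
      exact this
    · exact hF₂P z h2 h1
    · exact hF₁Q z h1 h2
    · exact hF₂F₁ z h2 h1
  · intro z hz
    rw [← hPQ] at hz
    rcases hz with h | h
    · exact Or.inl (Or.inl h)
    · exact Or.inr (Or.inl h)
  · exact hF₁inf.mono fun z hz => ⟨hF₁E hz, Or.inr hz⟩
  · exact hF₂inf.mono fun z hz => ⟨hF₂E hz, Or.inr hz⟩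


/-! ### Transfinite construction -/

/-- Index type of cardinality `ℵ₁` whose initial segments are countable. -/
abbrev W : Type := (Cardinal.aleph 1).ord.ToType

lemma countable_Iio (w : W) : (Set.Iio w).Countable := by
  rw [Cardinal.countable_iff_lt_aleph_one]
  exact Cardinal.mk_Iio_ord_toType w

attribute [local instance] Classical.propDecidable

variable (u : Ultrafilter ℕ) (φ : W → Set ℕ)

/-- The target "small" set at stage `w`. -/
noncomputable def Bset (w : W) : Set ℕ := if φ w ∈ u then ∅ else φ w

/-- The target "large" set at stage `w`. -/
noncomputable def Eset (w : W) : Set ℕ := if φ w ∈ u then φ w else Set.univ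

lemma Bset_not_mem (w : W) : Bset u φ w ∉ u := by
  unfold Bset
  split
  · exact Filter.empty_notMem _
  · assumption

lemma Eset_mem (w : W) : Eset u φ w ∈ u := by
  unfold Eset
  split
  · assumption
  · exact Filter.univ_mem

lemma key (hu : ∀ s ∈ u, s.Infinite) (w : W)
    (f : ∀ w' : W, w' < w → Set ℕ × Set ℕ)
    (h1 : ∀ w' h', (f w' h').1 ∉ u) (h2 : ∀ w' h', (f w' h').2 ∉ u)
    (h3 : ∀ w₁ h₁ w₂ h₂, ((f w₁ h₁).1 ∩ (f w₂ h₂).2).Finite) :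
    ∃ p : Set ℕ × Set ℕ, p.1 ∉ u ∧ p.2 ∉ u ∧ p.1 ∩ p.2 = ∅ ∧
      (∀ w' (h' : w' < w), (p.1 ∩ (f w' h').2).Finite ∧ ((f w' h').1 ∩ p.2).Finite) ∧
      Bset u φ w ⊆ p.1 ∪ p.2 ∧
      (Eset u φ w ∩ p.1).Infinite ∧ (Eset u φ w ∩ p.2).Infinite := by
  classical
  have hcz : Countable (Set.Iio w) := (countable_Iio w).to_subtype
  obtain ⟨g, hg⟩ := (countable_iff_exists_injective (Set.Iio w)).mp hcz
  set a : ℕ → Set ℕ := fun n =>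
    if h : ∃ z : Set.Iio w, g z = n then (f (Classical.choose h).1 (Classical.choose h).2).1
    else ∅ with haDef
  set c : ℕ → Set ℕ := fun n =>
    if h : ∃ z : Set.Iio w, g z = n then (f (Classical.choose h).1 (Classical.choose h).2).2
    else ∅ with hcDef
  have ha : ∀ n, a n ∉ u := fun n => by
    rw [haDef]; dsimp only; split
    · exact h1 _ _
    · exact Filter.empty_notMem _
  have hc : ∀ n, c n ∉ u := fun n => by
    rw [hcDef]; dsimp only; split
    · exact h2 _ _
    · exact Filter.empty_notMem _
  have hac : ∀ m n, (a m ∩ c n).Finite := fun m n => by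
    rw [haDef, hcDef]; dsimp only
    split
    · split
      · exact h3 _ _ _ _
      · simp
    · simp
  obtain ⟨A', C', hA', hC', hAc, haC, hACd, hBsub, hEA, hEC⟩ :=
    step u hu a c ha hc hac (Bset u φ w) (Bset_not_mem u φ w) (Eset u φ w) (Eset_mem u φ w)
  refine ⟨(A', C'), hA', hC', hACd, ?_, hBsub, hEA, hEC⟩
  intro w' h'
  have hz : ∃ z : Set.Iio w, g z = g ⟨w', h'⟩ := ⟨⟨w', h'⟩, rfl⟩
  have hzz : Classical.choose hz = ⟨w', h'⟩ := hg (Classical.choose_spec hz)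
  constructor
  · have := hAc (g ⟨w', h'⟩)
    rw [hcDef] at this; dsimp only at this
    rw [dif_pos hz, hzz] at this
    exact this
  · have := haC (g ⟨w', h'⟩)
    rw [haDef] at this; dsimp only at this
    rw [dif_pos hz, hzz] at this
    exact this

/-- One step of the recursion, made total. -/
noncomputable def buildStep (hu : ∀ s ∈ u, s.Infinite) (w : W)
    (f : ∀ w' : W, w' < w → Set ℕ × Set ℕ) : Set ℕ × Set ℕ :=
  if h : (∀ w' h', (f w' h').1 ∉ u) ∧ (∀ w' h', (f w' h').2 ∉ u) ∧
      (∀ w₁ h₁ w₂ h₂, ((f w₁ h₁).1 ∩ (f w₂ h₂).2).Finite)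
  then Classical.choose (key u φ hu w f h.1 h.2.1 h.2.2)
  else (∅, ∅)

noncomputable def AC (hu : ∀ s ∈ u, s.Infinite) : W → Set ℕ × Set ℕ :=
  (wellFounded_lt (α := W)).fix (buildStep u φ hu)

lemma AC_good (hu : ∀ s ∈ u, s.Infinite) (w : W) :
    (AC u φ hu w).1 ∉ u ∧ (AC u φ hu w).2 ∉ u ∧
    (AC u φ hu w).1 ∩ (AC u φ hu w).2 = ∅ ∧
    (∀ w' (_ : w' < w), ((AC u φ hu w).1 ∩ (AC u φ hu w').2).Finite ∧
      ((AC u φ hu w').1 ∩ (AC u φ hu w).2).Finite) ∧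
    Bset u φ w ⊆ (AC u φ hu w).1 ∪ (AC u φ hu w).2 ∧
    (Eset u φ w ∩ (AC u φ hu w).1).Infinite ∧
    (Eset u φ w ∩ (AC u φ hu w).2).Infinite := by
  induction w using (wellFounded_lt (α := W)).induction with
  | _ w ih =>
    have hcond : (∀ w' (h' : w' < w), (AC u φ hu w').1 ∉ u) ∧
        (∀ w' (h' : w' < w), (AC u φ hu w').2 ∉ u) ∧
        (∀ w₁ (h₁ : w₁ < w) w₂ (h₂ : w₂ < w),
          ((AC u φ hu w₁).1 ∩ (AC u φ hu w₂).2).Finite) := by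
      refine ⟨fun w' h' => (ih w' h').1, fun w' h' => (ih w' h').2.1, ?_⟩
      intro w₁ h₁ w₂ h₂
      rcases lt_trichotomy w₁ w₂ with h | h | h
      · exact ((ih w₂ h₂).2.2.2.1 w₁ h).2
      · subst h
        rw [(ih w₁ h₁).2.2.1]
        exact Set.finite_empty
      · exact ((ih w₁ h₁).2.2.2.1 w₂ h).1
    have hfix : AC u φ hu w = buildStep u φ hu w (fun w' _ => AC u φ hu w') :=
      (wellFounded_lt (α := W)).fix_eq (buildStep u φ hu) w
    rw [hfix, buildStep, dif_pos hcond]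
    exact Classical.choose_spec (key u φ hu w _ hcond.1 hcond.2.1 hcond.2.2)

/-- The two families, with all their global properties. -/
lemma exists_families (hu : ∀ s ∈ u, s.Infinite) :
    ∃ A C : W → Set ℕ,
      (∀ w, A w ∉ u) ∧ (∀ w, C w ∉ u) ∧
      (∀ w w', (A w ∩ C w').Finite) ∧
      (∀ w, Bset u φ w ⊆ A w ∪ C w) ∧
      (∀ w, (Eset u φ w ∩ A w).Infinite ∧ (Eset u φ w ∩ C w).Infinite) := by
  refine ⟨fun w => (AC u φ hu w).1, fun w => (AC u φ hu w).2,
    fun w => (AC_good u φ hu w).1, fun w => (AC_good u φ hu w).2.1, ?_,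
    fun w => (AC_good u φ hu w).2.2.2.2.1,
    fun w => ⟨(AC_good u φ hu w).2.2.2.2.2.1, (AC_good u φ hu w).2.2.2.2.2.2⟩⟩
  intro w w'
  rcases lt_trichotomy w w' with h | h | h
  · exact ((AC_good u φ hu w').2.2.2.1 w h).2
  · subst h
    rw [(AC_good u φ hu w).2.2.1]
    exact Set.finite_empty
  · exact ((AC_good u φ hu w).2.2.2.1 w' h).1


/-! ### Identification of `StoneCech ℕ` with `Ultrafilter ℕ` -/

/-- The canonical map from ultrafilters to the Stone-Čech compactification. -/
noncomputable def toSC (F : Ultrafilter ℕ) : StoneCech ℕ :=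
  T2Quotient.mk (Quot.mk _ F : PreStoneCech ℕ)

lemma continuous_toSC : Continuous toSC :=
  (T2Quotient.continuous_mk _).comp continuous_quot_mk

lemma toSC_pure (n : ℕ) : toSC (pure n) = stoneCechUnit n := rfl

/-- The inverse map. -/
noncomputable def fromSC : StoneCech ℕ → Ultrafilter ℕ :=
  stoneCechExtend (continuous_of_discreteTopology (f := (pure : ℕ → Ultrafilter ℕ)))

lemma continuous_fromSC : Continuous fromSC :=
  continuous_stoneCechExtend _

lemma fromSC_unit (n : ℕ) : fromSC (stoneCechUnit n) = pure n :=
  congrFun (stoneCechExtend_extends _) n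

lemma fromSC_toSC (F : Ultrafilter ℕ) : fromSC (toSC F) = F := by
  have h : fromSC ∘ toSC = id := by
    apply Continuous.ext_on denseRange_pure (continuous_fromSC.comp continuous_toSC)
      continuous_id
    rintro _ ⟨n, rfl⟩
    show fromSC (toSC (pure n)) = pure n
    rw [toSC_pure, fromSC_unit]
  exact congrFun h F

lemma toSC_fromSC (x : StoneCech ℕ) : toSC (fromSC x) = x := by
  have h : toSC ∘ fromSC = id := by
    apply stoneCech_hom_ext (continuous_toSC.comp continuous_fromSC) continuous_id
    funext n
    show toSC (fromSC (stoneCechUnit n)) = stoneCechUnit n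
    rw [fromSC_unit, toSC_pure]
  exact congrFun h x

end GillmanAux

/-- The Čech–Stone remainder `ℕ* = βℕ ∖ ℕ`. -/
def NStar : Type := {x : StoneCech ℕ // x ∉ Set.range (stoneCechUnit : ℕ → StoneCech ℕ)}

instance : TopologicalSpace NStar :=
  instTopologicalSpaceSubtype

namespace GillmanAux

/-- The ultrafilter associated to a point of `ℕ*`. -/
noncomputable def Phi (x : NStar) : Ultrafilter ℕ := fromSC x.1

lemma continuous_Phi : Continuous Phi := continuous_fromSC.comp continuous_subtype_val

lemma Phi_free (x : NStar) : ∀ s ∈ Phi x, s.Infinite := by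
  intro s hs
  by_contra hfin
  rw [Set.not_infinite] at hfin
  obtain ⟨n, _, hn⟩ := Ultrafilter.eq_pure_of_finite_mem hfin hs
  apply x.2
  refine ⟨n, ?_⟩
  have h2 := toSC_fromSC x.1
  rw [show fromSC x.1 = Phi x from rfl, hn, toSC_pure] at h2
  exact h2

lemma Phi_inj : Function.Injective Phi := by
  intro x y h
  apply Subtype.ext
  have := congrArg toSC h
  rwa [show toSC (Phi x) = x.1 from toSC_fromSC x.1,
    show toSC (Phi y) = y.1 from toSC_fromSC y.1] at this

lemma toSC_not_unit {ν : Ultrafilter ℕ} (hν : ∀ s ∈ ν, s.Infinite) :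
    toSC ν ∉ Set.range (stoneCechUnit : ℕ → StoneCech ℕ) := by
  rintro ⟨n, hn⟩
  have hpure : ν = pure n := by
    have := congrArg fromSC hn
    rwa [fromSC_unit, fromSC_toSC, eq_comm] at this
  have h1 : ({n} : Set ℕ) ∈ ν := by rw [hpure]; exact by simp
  exact (hν _ h1) (Set.finite_singleton n)

lemma mem_closure_aux (u : NStar) (A : W → Set ℕ)
    (hA : ∀ w, A w ∉ Phi u)
    (hmeet : ∀ E ∈ Phi u, ∃ w, (E ∩ A w).Infinite) :
    u ∈ closure ((⋃ w, {x : NStar | A w ∈ Phi x}) \ {u}) := by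
  rw [mem_closure_iff]
  intro O hO hOu
  obtain ⟨O₁, hO₁, rfl⟩ := isOpen_induced_iff.mp hO
  have hμ : Phi u ∈ toSC ⁻¹' O₁ := by
    show toSC (fromSC u.1) ∈ O₁
    rw [toSC_fromSC]
    exact hOu
  obtain ⟨b, ⟨E, rfl⟩, hmemb, hsub⟩ :=
    ultrafilterBasis_is_basis.exists_subset_of_mem_open hμ (hO₁.preimage continuous_toSC)
  obtain ⟨w, hw⟩ := hmeet E hmemb
  haveI := hw.cofinite_inf_principal_neBot
  set ν := Ultrafilter.of (Filter.cofinite ⊓ Filter.principal (E ∩ A w)) with hνdef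
  have hle := Ultrafilter.of_le (Filter.cofinite ⊓ Filter.principal (E ∩ A w))
  have hmemν : E ∩ A w ∈ ν := le_principal_iff.mp (hle.trans inf_le_right)
  have hcof : (ν : Filter ℕ) ≤ Filter.cofinite := hle.trans inf_le_left
  have hfree : ∀ s ∈ ν, s.Infinite := by
    intro s hs
    by_contra hf
    rw [Set.not_infinite] at hf
    have h2 : sᶜ ∈ ν := hcof (by rwa [Filter.mem_cofinite, compl_compl])
    exact (Ultrafilter.compl_mem_iff_notMem.mp h2) hs
  refine ⟨⟨toSC ν, toSC_not_unit hfree⟩, ?_, ?_, ?_⟩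
  · show toSC ν ∈ O₁
    exact hsub (Filter.mem_of_superset hmemν Set.inter_subset_left)
  · apply Set.mem_iUnion.mpr
    refine ⟨w, ?_⟩
    show A w ∈ Phi ⟨toSC ν, toSC_not_unit hfree⟩
    show A w ∈ fromSC (toSC ν)
    rw [fromSC_toSC]
    exact Filter.mem_of_superset hmemν Set.inter_subset_right
  · intro h
    replace h := Set.mem_singleton_iff.mp h
    apply hA w
    have : Phi ⟨toSC ν, toSC_not_unit hfree⟩ = Phi u := congrArg Phi h
    rw [← this]
    show A w ∈ fromSC (toSC ν)
    rw [fromSC_toSC]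
    exact Filter.mem_of_superset hmemν Set.inter_subset_right

end GillmanAux

open GillmanAux in
/-- Gillman's theorem (under CH): for every `u ∈ ℕ*` the space `ℕ* ∖ {u}` can be
partitioned into two disjoint relatively open sets each having `u` in its closure; in
particular `ℕ* ∖ {u}` is not C*-embedded in `ℕ*`. -/
theorem nstar_minus_point_partition (hCH : Cardinal.continuum = Cardinal.aleph 1)
    (u : NStar) :
    (∃ U V : Set NStar,
      (∃ U₀ : Set NStar, IsOpen U₀ ∧ U = U₀ \ {u}) ∧
      (∃ V₀ : Set NStar, IsOpen V₀ ∧ V = V₀ \ {u}) ∧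
      Disjoint U V ∧ U ∪ V = {u}ᶜ ∧ u ∈ closure U ∧ u ∈ closure V) ∧
    ∃ f : NStar → ℝ, ContinuousOn f {u}ᶜ ∧ (∀ x, |f x| ≤ 1) ∧
      ¬ ∃ g : NStar → ℝ, Continuous g ∧ ∀ x ∈ ({u}ᶜ : Set NStar), g x = f x := by
  classical
  -- the enumeration of `Set ℕ` in order type `ω₁`
  have hCH0 : Cardinal.continuum = Cardinal.aleph 1 :=
    Cardinal.lift_injective.{u_1, 0}
      (by rw [Cardinal.lift_continuum, Cardinal.lift_aleph, Ordinal.lift_one]; exact hCH)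
  have hmk : Cardinal.mk W = Cardinal.mk (Set ℕ) := by
    rw [Cardinal.mk_ord_toType, Cardinal.mk_set, Cardinal.mk_nat, Cardinal.two_power_aleph0, hCH0]
  obtain ⟨φe⟩ := Cardinal.eq.mp hmk
  -- the families
  obtain ⟨A, C, hA, hC, hAC, hBcov, hEmeet⟩ :=
    exists_families (Phi u) (fun w => φe w) (Phi_free u)
  have hcover : ∀ B : Set ℕ, B ∉ Phi u → ∃ w, B ⊆ A w ∪ C w := by
    intro B hB
    refine ⟨φe.symm B, ?_⟩
    have := hBcov (φe.symm B)
    rwa [Bset, Equiv.apply_symm_apply, if_neg hB] at this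
  have hmeet : ∀ E ∈ Phi u, ∃ w, (E ∩ A w).Infinite ∧ (E ∩ C w).Infinite := by
    intro E hE
    refine ⟨φe.symm E, ?_⟩
    have := hEmeet (φe.symm E)
    rwa [Eset, Equiv.apply_symm_apply, if_pos hE] at this
  -- the two open sets
  set U₀ : Set NStar := ⋃ w, {x : NStar | A w ∈ Phi x} with hU₀def
  set V₀ : Set NStar := ⋃ w, {x : NStar | C w ∈ Phi x} with hV₀def
  have hU₀open : IsOpen U₀ :=
    isOpen_iUnion fun w => (ultrafilter_isOpen_basic (A w)).preimage continuous_Phi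
  have hV₀open : IsOpen V₀ :=
    isOpen_iUnion fun w => (ultrafilter_isOpen_basic (C w)).preimage continuous_Phi
  have hU₀u : u ∉ U₀ := by
    intro h
    obtain ⟨w, hw⟩ := Set.mem_iUnion.mp h
    exact hA w hw
  have hV₀u : u ∉ V₀ := by
    intro h
    obtain ⟨w, hw⟩ := Set.mem_iUnion.mp h
    exact hC w hw
  have hdisj : U₀ ∩ V₀ = ∅ := by
    apply Set.eq_empty_iff_forall_notMem.mpr
    rintro x ⟨hxU, hxV⟩
    obtain ⟨w, hw⟩ := Set.mem_iUnion.mp hxU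
    obtain ⟨w', hw'⟩ := Set.mem_iUnion.mp hxV
    exact Phi_free x _ (Filter.inter_mem hw hw') (hAC w w')
  have hcov : ∀ x : NStar, x ≠ u → x ∈ U₀ ∪ V₀ := by
    intro x hx
    have hne : ∃ B ∈ Phi x, B ∉ Phi u := by
      by_contra h
      push_neg at h
      have hle : (Phi u : Filter ℕ) ≤ (Phi x : Filter ℕ) := fun s hs => h s hs
      exact hx (Phi_inj (Ultrafilter.coe_le_coe.mp hle).symm)
    obtain ⟨B, hBx, hBu⟩ := hne
    obtain ⟨w, hw⟩ := hcover B hBu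
    have : A w ∪ C w ∈ Phi x := Filter.mem_of_superset hBx hw
    rcases Ultrafilter.union_mem_iff.mp this with h | h
    · exact Or.inl (Set.mem_iUnion.mpr ⟨w, h⟩)
    · exact Or.inr (Set.mem_iUnion.mpr ⟨w, h⟩)
  have hclU : u ∈ closure (U₀ \ {u}) :=
    mem_closure_aux u A hA fun E hE => (hmeet E hE).imp fun w hw => hw.1
  have hclV : u ∈ closure (V₀ \ {u}) :=
    mem_closure_aux u C hC fun E hE => (hmeet E hE).imp fun w hw => hw.2
  constructor
  · refine ⟨U₀ \ {u}, V₀ \ {u}, ⟨U₀, hU₀open, rfl⟩, ⟨V₀, hV₀open, rfl⟩, ?_, ?_, hclU, hclV⟩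
    · rw [Set.disjoint_left]
      rintro x ⟨hxU, _⟩ ⟨hxV, _⟩
      exact Set.eq_empty_iff_forall_notMem.mp hdisj x ⟨hxU, hxV⟩
    · ext x
      simp only [Set.mem_union, Set.mem_diff, Set.mem_singleton_iff, Set.mem_compl_iff]
      constructor
      · rintro (⟨_, hx⟩ | ⟨_, hx⟩) <;> exact hx
      · intro hx
        rcases hcov x hx with h | h
        · exact Or.inl ⟨h, hx⟩
        · exact Or.inr ⟨h, hx⟩
  · refine ⟨fun x => if x ∈ U₀ then (1 : ℝ) else -1, ?_, ?_, ?_⟩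
    · intro x hx
      rcases hcov x hx with h | h
      · apply ContinuousWithinAt.mono (t := Set.univ) _ (Set.subset_univ _)
        rw [continuousWithinAt_univ]
        have hev : ∀ᶠ y in nhds x, (if y ∈ U₀ then (1 : ℝ) else -1) = 1 :=
          Filter.eventually_of_mem (hU₀open.mem_nhds h) fun y hy => if_pos hy
        exact ContinuousAt.congr continuousAt_const (Filter.EventuallyEq.symm hev)
      · apply ContinuousWithinAt.mono (t := Set.univ) _ (Set.subset_univ _)
        rw [continuousWithinAt_univ]
        have hev : ∀ᶠ y in nhds x, (if y ∈ U₀ then (1 : ℝ) else -1) = -1 :=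
          Filter.eventually_of_mem (hV₀open.mem_nhds h) fun y hy =>
            if_neg fun hyU => Set.eq_empty_iff_forall_notMem.mp hdisj y ⟨hyU, hy⟩
        exact ContinuousAt.congr continuousAt_const (Filter.EventuallyEq.symm hev)
    · intro x
      show |if x ∈ U₀ then (1 : ℝ) else -1| ≤ 1
      split <;> norm_num
    · rintro ⟨g, hg, hgf⟩
      have hgU : ∀ x ∈ U₀, g x = 1 := by
        intro x hxU
        have hxne : x ∈ ({u}ᶜ : Set NStar) := by
          simp only [Set.mem_compl_iff, Set.mem_singleton_iff]
          intro h
          exact hU₀u (h ▸ hxU)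
        rw [hgf x hxne]
        show (if x ∈ U₀ then (1 : ℝ) else -1) = 1
        rw [if_pos hxU]
      have hgV : ∀ x ∈ V₀, g x = -1 := by
        intro x hxV
        have hxne : x ∈ ({u}ᶜ : Set NStar) := by
          simp only [Set.mem_compl_iff, Set.mem_singleton_iff]
          intro h
          exact hV₀u (h ▸ hxV)
        rw [hgf x hxne]
        show (if x ∈ U₀ then (1 : ℝ) else -1) = -1
        rw [if_neg fun hyU => Set.eq_empty_iff_forall_notMem.mp hdisj x ⟨hyU, hxV⟩]
      have h1 : g u = 1 := by
        have hsub : U₀ ⊆ g ⁻¹' {1} := fun x hx => hgU x hx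
        have hclosed : IsClosed (g ⁻¹' {1}) := (isClosed_singleton).preimage hg
        have : u ∈ closure U₀ := closure_mono Set.diff_subset hclU
        exact hclosed.closure_subset_iff.mpr hsub this
      have h2 : g u = -1 := by
        have hsub : V₀ ⊆ g ⁻¹' {-1} := fun x hx => hgV x hx
        have hclosed : IsClosed (g ⁻¹' {-1}) := (isClosed_singleton).preimage hg
        have : u ∈ closure V₀ := closure_mono Set.diff_subset hclV
        exact hclosed.closure_subset_iff.mpr hsub this
      rw [h1] at h2
      norm_num at h2
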